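/- arXiv:0805.3111 — 3 statements merged into one kernel-verified Lean document; each statement's English description precedes it below -/
import Mathlib

section
/- Let L be self adjoint on ℂ^{2E} with eigenvalues in σ(L), and let λ⁺_min := min{λ ∈ σ(L) : λ > 0} (set λ⁺_min = ∞ if L has no positive eigenvalue). Then for every real k and every κ with 0 < κ < λ⁺_min, the operator norm of S(k + iκ) = -P - Q(L + i(k+iκ))^{-1}(L - i(k+iκ))Q is at most max{1, (λ⁺_min + κ)/(λ⁺_min - κ)}. -/
set_option maxHeartbeats 1000000

open Matrix
open scoped Matrix.Norms.L2Operator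

/-- The edge S-matrix in the Kuchment projector parametrisation:
S(z) = -P - Q (L + iz)⁻¹ (L - iz) Q with Q = 1 - P, for complex z. -/
noncomputable def SPL {n : Type*} [Fintype n] [DecidableEq n]
    (P L : Matrix n n ℂ) (z : ℂ) : Matrix n n ℂ :=
  -P - (1 - P) * (L + (Complex.I * z) • 1)⁻¹ * (L - (Complex.I * z) • 1) * (1 - P)

/-- if λ⁺_min is a lower bound for the positive eigenvalues of the
self adjoint matrix L, then for all real k and 0 < κ < λ⁺_min the operator norm
of S(k + iκ) is at most max{1, (λ⁺_min + κ)/(λ⁺_min - κ)}. -/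
theorem stmt_9 (E : ℕ) (P L : Matrix (Fin (2*E)) (Fin (2*E)) ℂ)
    (hP : P.IsHermitian) (hP2 : P * P = P)
    (hL : L.IsHermitian) (hPL : P * L = 0) (hLP : L * P = 0)
    (lp : ℝ) (hlp : 0 < lp)
    (hspec : ∀ μ : ℝ, (μ : ℂ) ∈ spectrum ℂ L → 0 < μ → lp ≤ μ) :
    ∀ (k κ : ℝ), 0 < κ → κ < lp →
      ‖SPL P L ((k : ℂ) + (κ : ℂ) * Complex.I)‖ ≤ max 1 ((lp + κ) / (lp - κ)) := by
  intro k κ hκ hκlp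
  set C : ℝ := max 1 ((lp + κ) / (lp - κ)) with hCdef
  have hC1 : (1 : ℝ) ≤ C := le_max_left _ _
  have hC0 : (0 : ℝ) ≤ C := by linarith
  have hlpκ : (0:ℝ) < lp - κ := by linarith
  have hC2 : lp + κ ≤ C * (lp - κ) := by
    have := le_max_right 1 ((lp + κ) / (lp - κ))
    calc lp + κ = ((lp + κ) / (lp - κ)) * (lp - κ) := by field_simp
    _ ≤ C * (lp - κ) := by nlinarith
  set ζ : ℂ := Complex.I * ((k : ℂ) + (κ : ℂ) * Complex.I) with hζdef
  have hζre : ζ.re = -κ := by simp [hζdef]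
  have hζim : ζ.im = k := by simp [hζdef]
  set d : Fin (2*E) → ℝ := hL.eigenvalues with hd
  have hd2 : ∀ i, d i ≤ 0 ∨ lp ≤ d i := by
    intro i
    rcases le_or_gt (d i) 0 with h | h
    · exact Or.inl h
    · exact Or.inr (hspec _ (spectrum.algebraMap_mem ℂ (hL.eigenvalues_mem_spectrum_real i)) h)
  set U : Matrix (Fin (2*E)) (Fin (2*E)) ℂ := (hL.eigenvectorUnitary : Matrix (Fin (2*E)) (Fin (2*E)) ℂ) with hU
  have hU1 : star U * U = 1 := Unitary.coe_star_mul_self hL.eigenvectorUnitary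
  have hU2 : U * star U = 1 := Unitary.coe_mul_star_self hL.eigenvectorUnitary
  -- conjugation of diagonals
  have key : ∀ v v' : Fin (2*E) → ℂ,
      (U * diagonal v * star U) * (U * diagonal v' * star U)
        = U * diagonal (fun i => v i * v' i) * star U := by
    intro v v'
    calc (U * diagonal v * star U) * (U * diagonal v' * star U)
        = U * (diagonal v * ((star U * U) * diagonal v')) * star U := by
          simp only [Matrix.mul_assoc]
      _ = U * diagonal (fun i => v i * v' i) * star U := by
          rw [hU1, Matrix.one_mul, diagonal_mul_diagonal, Matrix.mul_assoc]
  have hdiag : ∀ c : ℂ, L + c • 1 = U * diagonal (fun i => (d i : ℂ) + c) * star U := by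
    intro c
    have h1 : diagonal (fun i => (d i : ℂ) + c)
        = diagonal (Complex.ofReal ∘ d) + c • (1 : Matrix (Fin (2*E)) (Fin (2*E)) ℂ) := by
      rw [Matrix.smul_one_eq_diagonal, ← diagonal_add]
      rfl
    rw [h1, Matrix.mul_add, Matrix.add_mul]
    congr 1
    · exact hL.spectral_theorem
    · rw [Matrix.mul_smul, Matrix.smul_mul, Matrix.mul_one, hU2]
  set w : Fin (2*E) → ℂ := fun i => (d i : ℂ) + ζ with hw
  have hwne : ∀ i, w i ≠ 0 := by
    intro i h
    have hre : d i - κ = 0 := by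
      have := congrArg Complex.re h
      simp [hw, hζre] at this
      linarith
    rcases hd2 i with h' | h' <;> nlinarith
  set r : Fin (2*E) → ℂ := fun i => ((d i : ℂ) - ζ) / ((d i : ℂ) + ζ) with hr
  have hrC : ∀ i, ‖r i‖ ≤ C := by
    intro i
    rw [hr]
    simp only
    rw [norm_div]
    rw [div_le_iff₀ (by simpa [hw] using (norm_pos_iff.mpr (hwne i)))]
    have h1 : ‖(d i : ℂ) - ζ‖ ^ 2 = (d i + κ)^2 + k^2 := by
      rw [Complex.sq_norm, Complex.normSq_apply]
      simp [hζre, hζim]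
      ring
    have h2 : ‖(d i : ℂ) + ζ‖ ^ 2 = (d i - κ)^2 + k^2 := by
      rw [Complex.sq_norm, Complex.normSq_apply]
      simp [hζre, hζim]
      ring
    have hn1 : (0:ℝ) ≤ ‖(d i : ℂ) - ζ‖ := norm_nonneg _
    have hn2 : (0:ℝ) ≤ ‖(d i : ℂ) + ζ‖ := norm_nonneg _
    have hsq : ‖(d i : ℂ) - ζ‖ ^ 2 ≤ (C * ‖(d i : ℂ) + ζ‖) ^ 2 := by
      rw [mul_pow, h1, h2]
      have e2 : (1:ℝ) ≤ C ^ 2 := by nlinarith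
      rcases hd2 i with h' | h'
      · have e1 : (d i + κ)^2 ≤ (d i - κ)^2 := by nlinarith
        have e3 : (0:ℝ) ≤ (d i - κ)^2 + k^2 := by positivity
        nlinarith [e1, e2, e3]
      · have hd1 : d i + κ ≤ C * (d i - κ) := by
          nlinarith [mul_nonneg (by linarith : (0:ℝ) ≤ C - 1) (by linarith : (0:ℝ) ≤ d i - lp)]
        have hd0 : (0:ℝ) ≤ d i + κ := by nlinarith
        have e4 := mul_le_mul hd1 hd1 hd0 (le_trans hd0 hd1)
        nlinarith [e4, e2, sq_nonneg k]
    nlinarith [mul_nonneg hC0 hn2]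
  -- matrix identities
  set Q : Matrix (Fin (2*E)) (Fin (2*E)) ℂ := 1 - P with hQ
  set A : Matrix (Fin (2*E)) (Fin (2*E)) ℂ := L + ζ • 1 with hA
  set B : Matrix (Fin (2*E)) (Fin (2*E)) ℂ := L - ζ • 1 with hB
  have hAeq : A = U * diagonal w * star U := hdiag ζ
  have hBeq : B = U * diagonal (fun i => (d i : ℂ) - ζ) * star U := by
    have h0 : B = L + (-ζ) • 1 := by rw [hB, neg_smul, sub_eq_add_neg]
    have h1 : (fun i => (d i : ℂ) - ζ) = fun i => (d i : ℂ) + -ζ :=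
      funext fun i => sub_eq_add_neg _ _
    rw [h0, hdiag (-ζ), h1]
  set Ainv : Matrix (Fin (2*E)) (Fin (2*E)) ℂ := U * diagonal (fun i => (w i)⁻¹) * star U with hAinv
  have hwinv : (fun i => w i * (w i)⁻¹) = (fun _ => (1:ℂ)) := by
    funext i
    exact mul_inv_cancel₀ (hwne i)
  have hwinv' : (fun i => (w i)⁻¹ * w i) = (fun _ => (1:ℂ)) := by
    funext i
    exact inv_mul_cancel₀ (hwne i)
  have hAA1 : A * Ainv = 1 := by
    rw [hAeq, hAinv, key, hwinv]
    rw [show Matrix.diagonal (fun _ => (1:ℂ)) = (1 : Matrix (Fin (2*E)) (Fin (2*E)) ℂ) from Matrix.diagonal_one, Matrix.mul_one, hU2]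
  have hA1A : Ainv * A = 1 := by
    rw [hAinv, hAeq, key, hwinv']
    rw [show Matrix.diagonal (fun _ => (1:ℂ)) = (1 : Matrix (Fin (2*E)) (Fin (2*E)) ℂ) from Matrix.diagonal_one, Matrix.mul_one, hU2]
  have hAinveq : A⁻¹ = Ainv := Matrix.inv_eq_right_inv hAA1
  set M : Matrix (Fin (2*E)) (Fin (2*E)) ℂ := U * diagonal r * star U with hM
  have hMeq : A⁻¹ * B = M := by
    have hfun : (fun i => (w i)⁻¹ * ((d i : ℂ) - ζ)) = r := by
      funext i
      simp only [hr]
      rw [div_eq_inv_mul]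
    rw [hAinveq, hAinv, hBeq, key, hfun, hM]
  -- commutation
  have hPA : P * A = A * P := by
    rw [hA, Matrix.mul_add, Matrix.add_mul, hPL, hLP, Matrix.mul_smul, Matrix.smul_mul,
      Matrix.mul_one, Matrix.one_mul]
  have hPB : P * B = B * P := by
    rw [hB, Matrix.mul_sub, Matrix.sub_mul, hPL, hLP, Matrix.mul_smul, Matrix.smul_mul,
      Matrix.mul_one, Matrix.one_mul]
  have hPAinv : P * Ainv = Ainv * P := by
    calc P * Ainv = Ainv * A * (P * Ainv) := by rw [hA1A, Matrix.one_mul]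
    _ = Ainv * (A * P) * Ainv := by simp only [Matrix.mul_assoc]
    _ = Ainv * (P * A) * Ainv := by rw [← hPA]
    _ = Ainv * P * (A * Ainv) := by simp only [Matrix.mul_assoc]
    _ = Ainv * P := by rw [hAA1, Matrix.mul_one]
  have hPM : P * M = M * P := by
    rw [← hMeq, hAinveq, ← Matrix.mul_assoc, hPAinv, Matrix.mul_assoc, hPB, ← Matrix.mul_assoc]
  have hQM : Q * M = M * Q := by
    rw [hQ, Matrix.sub_mul, Matrix.mul_sub, Matrix.one_mul, Matrix.mul_one, hPM]
  have hQQ : Q * Q = Q := by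
    simp only [hQ, Matrix.mul_sub, Matrix.sub_mul, Matrix.one_mul, Matrix.mul_one, hP2]
    abel
  have hPQ : P * Q = 0 := by
    rw [hQ, Matrix.mul_sub, Matrix.mul_one, hP2, sub_self]
  have hS : SPL P L ((k : ℂ) + (κ : ℂ) * Complex.I) = -(P + M * Q) := by
    unfold SPL
    rw [← hζdef, ← hA, ← hB, ← hQ]
    have : Q * A⁻¹ * B * Q = M * Q := by
      rw [Matrix.mul_assoc Q A⁻¹ B, hMeq, hQM, Matrix.mul_assoc, hQQ]
    rw [this]
    abel
  have hPMQ : P * (M * Q) = 0 := by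
    rw [← Matrix.mul_assoc, hPM, Matrix.mul_assoc, hPQ, Matrix.mul_zero]
  -- norm estimates
  set φ := Matrix.toEuclideanCLM (𝕜 := ℂ) (n := Fin (2*E)) with hφ
  have hcomp : ∀ (N N' : Matrix (Fin (2*E)) (Fin (2*E)) ℂ) (x : EuclideanSpace ℂ (Fin (2*E))),
      φ (N * N') x = φ N (φ N' x) := by
    intro N N' x
    rw [_root_.map_mul]
    rfl
  have hadj : ∀ N : Matrix (Fin (2*E)) (Fin (2*E)) ℂ,
      ContinuousLinearMap.adjoint (φ N) = φ (star N) := by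
    intro N; rw [map_star]; rfl
  have hinner : ∀ (N : Matrix (Fin (2*E)) (Fin (2*E)) ℂ) (x y : EuclideanSpace ℂ (Fin (2*E))),
      (inner ℂ (φ N x) y : ℂ) = inner ℂ x (φ (star N) y) := by
    intro N x y
    rw [← hadj, ContinuousLinearMap.adjoint_inner_right]
  have hiso : ∀ (V : Matrix (Fin (2*E)) (Fin (2*E)) ℂ), star V * V = 1 →
      ∀ y : EuclideanSpace ℂ (Fin (2*E)), ‖φ V y‖ = ‖y‖ := by
    intro V hV y
    have h1 : (inner ℂ (φ V y) (φ V y) : ℂ) = inner ℂ y y := by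
      rw [hinner]
      have : φ (star V) (φ V y) = y := by
        rw [← ContinuousLinearMap.comp_apply, ← ContinuousLinearMap.mul_def, ← _root_.map_mul, hV,
          _root_.map_one, ContinuousLinearMap.one_apply]
      rw [this]
    have h2 : ‖φ V y‖ ^ 2 = ‖y‖ ^ 2 := by
      rw [← inner_self_eq_norm_sq (𝕜 := ℂ), ← inner_self_eq_norm_sq (𝕜 := ℂ), h1]
    calc ‖φ V y‖ = Real.sqrt (‖φ V y‖ ^ 2) := (Real.sqrt_sq (norm_nonneg _)).symm
    _ = Real.sqrt (‖y‖ ^ 2) := by rw [h2]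
    _ = ‖y‖ := Real.sqrt_sq (norm_nonneg _)
  have hdiagnorm : ∀ y : EuclideanSpace ℂ (Fin (2*E)), ‖φ (diagonal r) y‖ ≤ C * ‖y‖ := by
    intro y
    have happ : ∀ i, (φ (diagonal r) y) i = r i * y i := by
      intro i
      show (diagonal r *ᵥ ⇑y) i = r i * y i
      rw [mulVec_diagonal]
    rw [EuclideanSpace.norm_eq, EuclideanSpace.norm_eq]
    rw [show C * Real.sqrt (∑ i, ‖y i‖ ^ 2) = Real.sqrt (C ^ 2 * ∑ i, ‖y i‖ ^ 2) by
      rw [Real.sqrt_mul (sq_nonneg C), Real.sqrt_sq hC0]]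
    apply Real.sqrt_le_sqrt
    rw [Finset.mul_sum]
    apply Finset.sum_le_sum
    intro i _
    rw [happ i, norm_mul, mul_pow]
    have := hrC i
    have : ‖r i‖ ^ 2 ≤ C ^ 2 := by nlinarith [norm_nonneg (r i)]
    nlinarith [sq_nonneg ‖y i‖]
  have hMnorm : ∀ y : EuclideanSpace ℂ (Fin (2*E)), ‖φ M y‖ ≤ C * ‖y‖ := by
    intro y
    have : φ M y = φ U (φ (diagonal r) (φ (star U) y)) := by
      rw [hM, hcomp, hcomp]
    rw [this, hiso U hU1, ← hiso (star U) (by rwa [star_star]) y]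
    exact hdiagnorm _
  -- final bound
  rw [Matrix.cstar_norm_def]
  apply ContinuousLinearMap.opNorm_le_bound _ hC0
  intro x
  rw [hS, _root_.map_neg, ContinuousLinearMap.neg_apply, norm_neg, _root_.map_add, ContinuousLinearMap.add_apply]
  have horth : (inner ℂ (φ P x) (φ (M * Q) x) : ℂ) = 0 := by
    rw [hinner]
    have hstarP : star P = P := hP
    have : φ (star P) (φ (M * Q) x) = φ (P * (M * Q)) x := by
      rw [hstarP, ← hcomp]
    rw [this, hPMQ, _root_.map_zero, ContinuousLinearMap.zero_apply, inner_zero_right]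
  have hpyth1 : ‖φ P x + φ (M * Q) x‖ ^ 2 = ‖φ P x‖ ^ 2 + ‖φ (M * Q) x‖ ^ 2 := by
    rw [norm_add_sq (𝕜 := ℂ), horth]
    simp
  have horth2 : (inner ℂ (φ P x) (φ Q x) : ℂ) = 0 := by
    rw [hinner]
    have hstarP : star P = P := hP
    have : φ (star P) (φ Q x) = φ (P * Q) x := by rw [hstarP, ← hcomp]
    rw [this, hPQ, _root_.map_zero, ContinuousLinearMap.zero_apply, inner_zero_right]
  have hpyth2 : ‖x‖ ^ 2 = ‖φ P x‖ ^ 2 + ‖φ Q x‖ ^ 2 := by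
    have hsum : φ P x + φ Q x = x := by
      rw [← ContinuousLinearMap.add_apply, ← map_add, hQ]
      simp
    conv_lhs => rw [← hsum]
    rw [norm_add_sq (𝕜 := ℂ), horth2]
    simp
  have hMQx : ‖φ (M * Q) x‖ ≤ C * ‖φ Q x‖ := by
    have : φ (M * Q) x = φ M (φ Q x) := hcomp _ _ _
    rw [this]
    exact hMnorm _
  have hsq : ‖φ P x + φ (M * Q) x‖ ^ 2 ≤ (C * ‖x‖) ^ 2 := by
    rw [hpyth1, mul_pow]
    have h1 : ‖φ (M * Q) x‖ ^ 2 ≤ C ^ 2 * ‖φ Q x‖ ^ 2 := by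
      rw [← mul_pow]
      have := hMQx
      nlinarith [norm_nonneg (φ (M * Q) x), mul_nonneg hC0 (norm_nonneg (φ Q x))]
    have h2 : ‖φ P x‖ ^ 2 ≤ C ^ 2 * ‖φ P x‖ ^ 2 := by
      have e2 : (1:ℝ) ≤ C ^ 2 := by nlinarith
      have := mul_le_mul_of_nonneg_right e2 (sq_nonneg ‖φ P x‖)
      linarith
    rw [hpyth2]
    nlinarith
  calc ‖φ P x + φ (M * Q) x‖ = Real.sqrt (‖φ P x + φ (M * Q) x‖ ^ 2) :=
        (Real.sqrt_sq (norm_nonneg _)).symm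
  _ ≤ Real.sqrt ((C * ‖x‖) ^ 2) := Real.sqrt_le_sqrt hsq
  _ = C * ‖x‖ := Real.sqrt_sq (mul_nonneg hC0 (norm_nonneg _))
end

section
/- With the same setup, if κ > λ_max := max{|λ| : λ ∈ σ(L)\{0}}, then ‖S(k + iκ)‖ ≤ (κ + λ_max)/(κ - λ_max) for all real k. -/
open Matrix
open scoped Matrix.Norms.L2Operator
open scoped InnerProductSpace

section Helpers

variable {n : Type*} [Fintype n] [DecidableEq n]

/-- The operator norm of the identity matrix is at most one. -/
lemma aux_norm_one_le : ‖(1 : Matrix n n ℂ)‖ ≤ 1 := by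
  rw [Matrix.cstar_norm_def, _root_.map_one]
  exact ContinuousLinearMap.norm_id_le

/-- Unitary matrices have operator norm at most one. -/
lemma aux_norm_unitary_le {U : Matrix n n ℂ} (hU : U ∈ Matrix.unitaryGroup n ℂ) : ‖U‖ ≤ 1 := by
  have h1 : ‖Uᴴ * U‖ = ‖U‖ * ‖U‖ := Matrix.l2_opNorm_conjTranspose_mul_self U
  have h2 : Uᴴ * U = 1 := by
    have := Matrix.mem_unitaryGroup_iff'.mp hU
    simpa [Matrix.star_eq_conjTranspose] using this
  rw [h2] at h1
  nlinarith [norm_nonneg U, aux_norm_one_le (n := n)]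

/-- Bound on the operator norm of a diagonal matrix from a uniform bound on its entries. -/
lemma aux_norm_diagonal_le {f : n → ℂ} {C : ℝ} (hC : 0 ≤ C) (h : ∀ i, ‖f i‖ ≤ C) :
    ‖Matrix.diagonal f‖ ≤ C := by
  rw [Matrix.cstar_norm_def]
  apply ContinuousLinearMap.opNorm_le_bound _ hC
  intro x
  have happ : ∀ i, toEuclideanCLM (𝕜 := ℂ) (Matrix.diagonal f) x i
      = f i * (WithLp.equiv 2 _ x) i := by
    intro i
    have := Matrix.ofLp_toEuclideanCLM (𝕜 := ℂ) (Matrix.diagonal f) x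
    have h2 := congrFun this i
    simpa [Matrix.mulVec_diagonal] using h2
  set y := toEuclideanCLM (𝕜 := ℂ) (Matrix.diagonal f) x with hy
  have h1 : ‖y‖ ^ 2 ≤ (C * ‖x‖) ^ 2 := by
    rw [EuclideanSpace.norm_eq, mul_pow, EuclideanSpace.norm_eq,
      Real.sq_sqrt (by positivity), Real.sq_sqrt (by positivity), Finset.mul_sum]
    apply Finset.sum_le_sum
    intro i _
    have := happ i
    have hyi : ‖y i‖ = ‖f i‖ * ‖x i‖ := by
      rw [this]
      simp [norm_mul]
    rw [hyi, mul_pow]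
    have : ‖f i‖ ^ 2 ≤ C ^ 2 := by
      have := h i
      nlinarith [norm_nonneg (f i)]
    nlinarith [sq_nonneg ‖x i‖, sq_nonneg ‖f i‖]
  have := Real.sqrt_le_sqrt h1
  rwa [Real.sqrt_sq (norm_nonneg _), Real.sqrt_sq (by positivity)] at this

/-- The key operator-theoretic bound: if `p` is an orthogonal projection and `‖m‖ ≤ C` with
`C ≥ 1`, then `‖-p - (1-p) m (1-p)‖ ≤ C`. -/
lemma aux_key_clm {H : Type*} [NormedAddCommGroup H] [InnerProductSpace ℂ H] [CompleteSpace H]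
    (p m : H →L[ℂ] H) (hp : IsSelfAdjoint p) (hp2 : p * p = p) {C : ℝ} (hC : 1 ≤ C)
    (hm : ‖m‖ ≤ C) : ‖-p - (1 - p) * m * (1 - p)‖ ≤ C := by
  set q : H →L[ℂ] H := 1 - p with hq_def
  have hq : IsSelfAdjoint q := by
    simp only [hq_def, _root_.IsSelfAdjoint, star_sub, star_one, hp.star_eq]
  have hq2 : q * q = q := by
    simp only [hq_def, mul_sub, sub_mul, one_mul, mul_one, hp2, sub_self, sub_zero]
  have hpq : p * q = 0 := by simp [hq_def, mul_sub, hp2]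
  have horth : ∀ v w : H, ⟪p v, q w⟫_ℂ = 0 := by
    intro v w
    have hadj : ContinuousLinearMap.adjoint p = p := hp
    calc ⟪p v, q w⟫_ℂ = ⟪ContinuousLinearMap.adjoint p v, q w⟫_ℂ := by rw [hadj]
      _ = ⟪v, p (q w)⟫_ℂ := ContinuousLinearMap.adjoint_inner_left _ _ _
      _ = ⟪v, (p * q) w⟫_ℂ := rfl
      _ = 0 := by rw [hpq]; simp
  have hqnorm : ‖q‖ ≤ 1 := by
    have h1 : ‖star q * q‖ = ‖q‖ * ‖q‖ := CStarRing.norm_star_mul_self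
    rw [hq.star_eq, hq2] at h1
    nlinarith [norm_nonneg q]
  have hC0 : (0:ℝ) ≤ C := le_trans zero_le_one hC
  rw [ContinuousLinearMap.opNorm_le_iff hC0]
  intro v
  have hdecomp : (-p - q * m * q) v = -(p v + (q * m * q) v) := by
    simp only [ContinuousLinearMap.sub_apply, ContinuousLinearMap.neg_apply]
    abel
  rw [hdecomp, norm_neg]
  set a := p v with ha_def
  set b := (q * m * q) v with hb_def
  have hb_eq : b = q (m (q v)) := rfl
  have hab : ⟪a, b⟫_ℂ = 0 := horth v (m (q v))
  have hsq : ‖a + b‖ * ‖a + b‖ = ‖a‖ * ‖a‖ + ‖b‖ * ‖b‖ :=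
    norm_add_sq_eq_norm_sq_add_norm_sq_of_inner_eq_zero a b hab
  have hsplit : ‖a‖ * ‖a‖ + ‖q v‖ * ‖q v‖ = ‖v‖ * ‖v‖ := by
    have hv : v = a + q v := by
      have h1 : p + q = 1 := by simp [hq_def]
      calc v = (p + q) v := by rw [h1]; rfl
        _ = a + q v := rfl
    rw [← norm_add_sq_eq_norm_sq_add_norm_sq_of_inner_eq_zero a (q v) (horth v v), ← hv]
  have hble : ‖b‖ ≤ C * ‖q v‖ := by
    calc ‖b‖ = ‖q (m (q v))‖ := by rw [hb_eq]
      _ ≤ ‖q‖ * ‖m (q v)‖ := q.le_opNorm _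
      _ ≤ 1 * ‖m (q v)‖ := by gcongr
      _ = ‖m (q v)‖ := one_mul _
      _ ≤ ‖m‖ * ‖q v‖ := m.le_opNorm _
      _ ≤ C * ‖q v‖ := by gcongr
  have hCC : 1 ≤ C * C := by nlinarith
  have hbb : ‖b‖ * ‖b‖ ≤ (C * ‖q v‖) * (C * ‖q v‖) :=
    mul_self_le_mul_self (norm_nonneg b) hble
  have hfin : ‖a + b‖ * ‖a + b‖ ≤ (C * ‖v‖) * (C * ‖v‖) := by
    nlinarith [mul_nonneg (norm_nonneg a) (norm_nonneg a)]
  calc ‖a + b‖ = Real.sqrt (‖a + b‖ * ‖a + b‖) := (Real.sqrt_mul_self (norm_nonneg _)).symm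
    _ ≤ Real.sqrt ((C * ‖v‖) * (C * ‖v‖)) := Real.sqrt_le_sqrt hfin
    _ = C * ‖v‖ := Real.sqrt_mul_self (by positivity)

/-- Scalar bound for the eigenvalues of the Cayley-type transform. -/
lemma aux_scalar_bound {c : ℂ} {μ lmax κ : ℝ} (hre : c.re = -κ) (hμ : |μ| ≤ lmax)
    (h0 : 0 ≤ lmax) (hκ : lmax < κ) :
    ‖((μ:ℂ) + c)⁻¹ * ((μ:ℂ) - c)‖ ≤ (κ + lmax) / (κ - lmax) := by
  have hμ1 : μ ≤ lmax := le_trans (le_abs_self μ) hμ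
  have hμ2 : -lmax ≤ μ := neg_le_of_abs_le hμ
  set a := ‖(μ:ℂ) + c‖ with ha_def
  set b := ‖(μ:ℂ) - c‖ with hb_def
  have ha2 : a ^ 2 = (μ - κ) ^ 2 + c.im ^ 2 := by
    rw [ha_def, Complex.sq_norm, Complex.normSq_apply]
    simp [hre]; ring
  have hb2 : b ^ 2 = (μ + κ) ^ 2 + c.im ^ 2 := by
    rw [hb_def, Complex.sq_norm, Complex.normSq_apply]
    simp [hre]; ring
  have hapos : 0 < a := by
    apply norm_pos_iff.mpr
    intro h
    have : ((μ:ℂ) + c).re = 0 := by rw [h]; simp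
    simp [hre] at this
    linarith
  rw [norm_mul, norm_inv, ← ha_def, ← hb_def, inv_mul_eq_div]
  rw [div_le_div_iff₀ hapos (by linarith)]
  have hkey : (b * (κ - lmax)) ^ 2 ≤ ((κ + lmax) * a) ^ 2 := by
    have h1 : (μ + κ) * (κ - lmax) ≤ (κ + lmax) * (κ - μ) := by nlinarith
    have h2 : 0 ≤ (μ + κ) * (κ - lmax) := by nlinarith
    have h3 : ((μ + κ) * (κ - lmax)) ^ 2 ≤ ((κ + lmax) * (κ - μ)) ^ 2 := by
      nlinarith
    have h4 : (κ - lmax) ^ 2 ≤ (κ + lmax) ^ 2 := by nlinarith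
    nlinarith [sq_nonneg c.im, sq_nonneg (μ - κ), sq_nonneg (μ + κ)]
  have hb0 : 0 ≤ b := norm_nonneg _
  have hbn : 0 ≤ b * (κ - lmax) := mul_nonneg hb0 (by linarith)
  have han : 0 ≤ (κ + lmax) * a := mul_nonneg (by linarith) hapos.le
  nlinarith [hkey]

/-- Diagonalisation of the Cayley-type transform of a hermitian matrix. -/
lemma aux_diag_form (E : ℕ) (L : Matrix (Fin (2*E)) (Fin (2*E)) ℂ) (hL : L.IsHermitian) (c : ℂ)
    (g : Fin (2*E) → ℂ) (hg : g = fun i => ((hL.eigenvalues i : ℝ) : ℂ))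
    (hgc : ∀ i, g i + c ≠ 0) :
    (L + c • 1)⁻¹ * (L - c • 1) =
      (hL.eigenvectorUnitary : Matrix (Fin (2*E)) (Fin (2*E)) ℂ) *
        diagonal (fun i => (g i + c)⁻¹ * (g i - c)) *
        star (hL.eigenvectorUnitary : Matrix (Fin (2*E)) (Fin (2*E)) ℂ) := by
  set u : Matrix (Fin (2*E)) (Fin (2*E)) ℂ :=
    (hL.eigenvectorUnitary : Matrix (Fin (2*E)) (Fin (2*E)) ℂ) with hu_def
  have hu : u ∈ Matrix.unitaryGroup (Fin (2*E)) ℂ := hL.eigenvectorUnitary.2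
  have huu : u * star u = 1 := Matrix.mem_unitaryGroup_iff.mp hu
  have hsuu : star u * u = 1 := Matrix.mem_unitaryGroup_iff'.mp hu
  have hD : L = u * diagonal g * star u := by
    rw [hg]; exact hL.spectral_theorem
  have hconj : ∀ f : Fin (2*E) → ℂ, u * diagonal f * star u + c • 1
      = u * diagonal (fun i => f i + c) * star u := by
    intro f
    have h1 : (c • 1 : Matrix (Fin (2*E)) (Fin (2*E)) ℂ) = u * (c • 1) * star u := by
      rw [mul_smul_comm, smul_mul_assoc, mul_one, huu]
    have h2 : (diagonal fun i => f i + c) = diagonal f + c • (1 : Matrix (Fin (2*E)) (Fin (2*E)) ℂ) := by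
      rw [Matrix.smul_one_eq_diagonal, ← Matrix.diagonal_add]
    rw [h2, mul_add, add_mul, ← h1]
  have hconj' : ∀ f : Fin (2*E) → ℂ, u * diagonal f * star u - c • 1
      = u * diagonal (fun i => f i - c) * star u := by
    intro f
    have h1 : (c • 1 : Matrix (Fin (2*E)) (Fin (2*E)) ℂ) = u * (c • 1) * star u := by
      rw [mul_smul_comm, smul_mul_assoc, mul_one, huu]
    have h2 : (diagonal fun i => f i - c) = diagonal f - c • (1 : Matrix (Fin (2*E)) (Fin (2*E)) ℂ) := by
      rw [Matrix.smul_one_eq_diagonal, ← Matrix.diagonal_sub]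
    rw [h2, mul_sub, sub_mul, ← h1]
  have hadd : L + c • 1 = u * diagonal (fun i => g i + c) * star u := by
    rw [hD, hconj]
  have hsub : L - c • 1 = u * diagonal (fun i => g i - c) * star u := by
    rw [hD, hconj']
  have hinv : (L + c • 1)⁻¹ = u * diagonal (fun i => (g i + c)⁻¹) * star u := by
    apply Matrix.inv_eq_right_inv
    rw [hadd]
    calc u * diagonal (fun i => g i + c) * star u * (u * diagonal (fun i => (g i + c)⁻¹) * star u)
        = u * (diagonal (fun i => g i + c) * (star u * u) * diagonal (fun i => (g i + c)⁻¹))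
          * star u := by simp only [mul_assoc]
      _ = u * (diagonal (fun i => g i + c) * diagonal (fun i => (g i + c)⁻¹)) * star u := by
          rw [hsuu, mul_one]
      _ = u * diagonal (fun i => (g i + c) * (g i + c)⁻¹) * star u := by
          rw [Matrix.diagonal_mul_diagonal]
      _ = u * 1 * star u := by
          rw [show (fun i => (g i + c) * (g i + c)⁻¹) = fun _ : Fin (2*E) => (1:ℂ) from
            funext fun i => mul_inv_cancel₀ (hgc i), Matrix.diagonal_one]
      _ = 1 := by rw [mul_one, huu]
  rw [hinv, hsub]
  calc u * diagonal (fun i => (g i + c)⁻¹) * star u * (u * diagonal (fun i => g i - c) * star u)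
      = u * (diagonal (fun i => (g i + c)⁻¹) * (star u * u) * diagonal (fun i => g i - c))
        * star u := by simp only [mul_assoc]
    _ = u * (diagonal (fun i => (g i + c)⁻¹) * diagonal (fun i => g i - c)) * star u := by
        rw [hsuu, mul_one]
    _ = u * diagonal (fun i => (g i + c)⁻¹ * (g i - c)) * star u := by
        rw [Matrix.diagonal_mul_diagonal]

end Helpers

/-- if λ_max ≥ 0 bounds the moduli of the eigenvalues of the self
adjoint matrix L and κ > λ_max, then ‖S(k + iκ)‖ ≤ (κ + λ_max)/(κ - λ_max)
for all real k. -/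
theorem stmt_10 (E : ℕ) (P L : Matrix (Fin (2*E)) (Fin (2*E)) ℂ)
    (hP : P.IsHermitian) (hP2 : P * P = P)
    (hL : L.IsHermitian) (hPL : P * L = 0) (hLP : L * P = 0)
    (lmax : ℝ) (hlmax : 0 ≤ lmax)
    (hspec : ∀ μ : ℂ, μ ∈ spectrum ℂ L → ‖μ‖ ≤ lmax) :
    ∀ (k κ : ℝ), lmax < κ →
      ‖SPL P L ((k : ℂ) + (κ : ℂ) * Complex.I)‖ ≤ (κ + lmax) / (κ - lmax) := by
  intro k κ hκ
  set z : ℂ := (k:ℂ) + (κ:ℂ) * Complex.I with hz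
  set c : ℂ := Complex.I * z with hc
  have hcre : c.re = -κ := by
    simp [hc, hz, Complex.mul_re]
  set g : Fin (2*E) → ℂ := fun i => ((hL.eigenvalues i : ℝ) : ℂ) with hg
  have hev : ∀ i, |hL.eigenvalues i| ≤ lmax := by
    intro i
    have h1 := hL.eigenvalues_mem_spectrum_real i
    have h2 : ((hL.eigenvalues i : ℝ) : ℂ) ∈ spectrum ℂ L := by
      rw [← Complex.coe_algebraMap]
      exact spectrum.algebraMap_mem ℂ h1
    have := hspec _ h2
    rwa [Complex.norm_real, Real.norm_eq_abs] at this
  have hgc : ∀ i, g i + c ≠ 0 := by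
    intro i h
    have h1 : (g i + c).re = hL.eigenvalues i - κ := by
      simp [hg, hcre, Complex.add_re]
      ring
    rw [h] at h1
    have h2 : hL.eigenvalues i ≤ lmax := le_trans (le_abs_self _) (hev i)
    simp at h1
    linarith
  set C : ℝ := (κ + lmax) / (κ - lmax) with hC_def
  have hC1 : (1:ℝ) ≤ C := by
    rw [hC_def, le_div_iff₀ (by linarith)]
    linarith
  have hC0 : (0:ℝ) ≤ C := le_trans zero_le_one hC1
  set M : Matrix (Fin (2*E)) (Fin (2*E)) ℂ := (L + c • 1)⁻¹ * (L - c • 1) with hM_def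
  have hMform := aux_diag_form E L hL c g hg hgc
  have hu : (hL.eigenvectorUnitary : Matrix (Fin (2*E)) (Fin (2*E)) ℂ)
      ∈ Matrix.unitaryGroup (Fin (2*E)) ℂ := hL.eigenvectorUnitary.2
  have hMnorm : ‖M‖ ≤ C := by
    rw [hM_def, hMform]
    set u : Matrix (Fin (2*E)) (Fin (2*E)) ℂ :=
      (hL.eigenvectorUnitary : Matrix (Fin (2*E)) (Fin (2*E)) ℂ)
    set D : Matrix (Fin (2*E)) (Fin (2*E)) ℂ := diagonal (fun i => (g i + c)⁻¹ * (g i - c))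
    have hun : ‖u‖ ≤ 1 := aux_norm_unitary_le hu
    have hsn : ‖star u‖ ≤ 1 := by
      rw [Matrix.star_eq_conjTranspose, Matrix.l2_opNorm_conjTranspose]
      exact hun
    have hDn : ‖D‖ ≤ C := by
      apply aux_norm_diagonal_le hC0
      intro i
      exact aux_scalar_bound hcre (hev i) hlmax hκ
    calc ‖u * D * star u‖ ≤ ‖u * D‖ * ‖star u‖ := Matrix.l2_opNorm_mul _ _
      _ ≤ (‖u‖ * ‖D‖) * ‖star u‖ := by
          have := Matrix.l2_opNorm_mul u D
          exact mul_le_mul_of_nonneg_right this (norm_nonneg _)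
      _ ≤ (1 * C) * 1 := by
          apply mul_le_mul _ hsn (norm_nonneg _) (by linarith)
          exact mul_le_mul hun hDn (norm_nonneg _) zero_le_one
      _ = C := by ring
  have hSPL : SPL P L z = -P - (1 - P) * M * (1 - P) := by
    rw [SPL, hM_def]
    simp only [← hc, mul_assoc]
  rw [hSPL, Matrix.cstar_norm_def]
  have hφ : toEuclideanCLM (𝕜 := ℂ) (-P - (1 - P) * M * (1 - P))
      = -(toEuclideanCLM (𝕜 := ℂ) P)
        - (1 - toEuclideanCLM (𝕜 := ℂ) P) * (toEuclideanCLM (𝕜 := ℂ) M)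
          * (1 - toEuclideanCLM (𝕜 := ℂ) P) := by
    simp only [map_sub, map_neg, _root_.map_mul, _root_.map_one]
  rw [hφ]
  apply aux_key_clm
  · show star (toEuclideanCLM (𝕜 := ℂ) P) = toEuclideanCLM (𝕜 := ℂ) P
    rw [← map_star, show star P = P from hP]
  · rw [← _root_.map_mul, hP2]
  · exact hC1
  · rw [show ‖toEuclideanCLM (𝕜 := ℂ) M‖ = ‖M‖ from (Matrix.cstar_norm_def M).symm]
    exact hMnorm
end

section
/- Suppose l_min > 2/λ⁺_min, where λ⁺_min is the smallest positive eigenvalue of L (∞ if none). Then there exists ε₀ > 0 such that for all 0 < ε < ε₀ the condition ε < λ⁺_min tanh(ε l_min / 2) holds, and for any such ε and all real k, ‖U(k + iε)‖ ≤ max{1, (λ⁺_min + ε)/(λ⁺_min - ε)} e^{-ε l_min} < 1, so that (1 - U(k+iε))^{-1} = Σ_{l=0}^∞ U(k+iε)^l converges absolutely. -/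
open Matrix
open scoped Matrix.Norms.L2Operator

/-- The metric matrix T(𝒍;z) with off-diagonal blocks diag(e^{izl_j}). -/
noncomputable def Tmat {E : ℕ} (l : Fin E → ℝ) (z : ℂ) :
    Matrix (Fin E ⊕ Fin E) (Fin E ⊕ Fin E) ℂ :=
  Matrix.fromBlocks 0 (Matrix.diagonal fun j => Complex.exp (Complex.I * z * (l j)))
    (Matrix.diagonal fun j => Complex.exp (Complex.I * z * (l j))) 0

section AuxLemmas


section Helpers
variable {n : Type*} [Fintype n] [DecidableEq n]

lemma unit_norm_le (V : Matrix n n ℂ) (hV : V ∈ Matrix.unitaryGroup n ℂ) : ‖V‖ ≤ 1 := by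
  have h1 : ‖(1 : Matrix n n ℂ)‖ ≤ 1 := by
    rw [Matrix.cstar_norm_def, _root_.map_one, ContinuousLinearMap.one_def]
    exact ContinuousLinearMap.norm_id_le
  have h2 := Matrix.l2_opNorm_conjTranspose_mul_self V
  have h3 : Vᴴ * V = 1 := by
    have := hV.1
    rwa [Matrix.star_eq_conjTranspose] at this
  rw [h3] at h2
  nlinarith [norm_nonneg V]

lemma opnorm_le_sq (A : Matrix n n ℂ) {c : ℝ} (hc : 0 ≤ c)
    (h : ∀ x : n → ℂ, ∑ i, ‖(A *ᵥ x) i‖^2 ≤ c^2 * ∑ i, ‖x i‖^2) : ‖A‖ ≤ c := by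
  rw [Matrix.cstar_norm_def]
  refine ContinuousLinearMap.opNorm_le_bound _ hc fun x => ?_
  have hx : ‖x‖ = Real.sqrt (∑ i, ‖x i‖^2) := EuclideanSpace.norm_eq x
  have hy : ‖(Matrix.toEuclideanCLM (𝕜 := ℂ) A) x‖
      = Real.sqrt (∑ i, ‖(A *ᵥ (WithLp.equiv 2 _ x)) i‖^2) :=
    EuclideanSpace.norm_eq _
  rw [hx, hy, ← Real.sqrt_sq hc, ← Real.sqrt_mul (sq_nonneg c)]
  exact Real.sqrt_le_sqrt (h _)

lemma diag_norm_le (d : n → ℂ) {c : ℝ} (hc : 0 ≤ c)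
    (hd : ∀ i, ‖d i‖ ≤ c) : ‖Matrix.diagonal d‖ ≤ c := by
  refine opnorm_le_sq _ hc fun x => ?_
  rw [Finset.mul_sum]
  refine Finset.sum_le_sum fun i _ => ?_
  rw [Matrix.mulVec_diagonal, norm_mul, mul_pow]
  have h2 : ‖d i‖^2 ≤ c^2 := by nlinarith [norm_nonneg (d i), hd i]
  nlinarith [norm_nonneg (x i), sq_nonneg ‖x i‖]

lemma mulVec_sq_le (A : Matrix n n ℂ) (v : n → ℂ) :
    ∑ i, ‖(A *ᵥ v) i‖^2 ≤ ‖A‖^2 * ∑ i, ‖v i‖^2 := by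
  have h := Matrix.l2_opNorm_mulVec A ((WithLp.equiv 2 _).symm v)
  have hv : ‖((WithLp.equiv 2 (n → ℂ)).symm v : EuclideanSpace ℂ n)‖
      = Real.sqrt (∑ i, ‖v i‖^2) := EuclideanSpace.norm_eq _
  have hAv : ‖((EuclideanSpace.equiv n ℂ).symm (A *ᵥ ((WithLp.equiv 2 (n → ℂ)).symm v : EuclideanSpace ℂ n)) : EuclideanSpace ℂ n)‖
      = Real.sqrt (∑ i, ‖(A *ᵥ v) i‖^2) := EuclideanSpace.norm_eq _
  rw [hAv, hv] at h
  have h1 : (0:ℝ) ≤ ∑ i, ‖(A *ᵥ v) i‖^2 := Finset.sum_nonneg fun i _ => sq_nonneg _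
  have h2 : (0:ℝ) ≤ ∑ i, ‖v i‖^2 := Finset.sum_nonneg fun i _ => sq_nonneg _
  have := Real.sqrt_le_sqrt (le_refl (∑ i, ‖(A *ᵥ v) i‖^2))
  nlinarith [Real.sq_sqrt h1, Real.sq_sqrt h2, Real.sqrt_nonneg (∑ i, ‖(A *ᵥ v) i‖^2),
    Real.sqrt_nonneg (∑ i, ‖v i‖^2), norm_nonneg A]

lemma sq_sum_add (u v : n → ℂ) (h : dotProduct (star u) v = 0) :
    ∑ i, ‖u i + v i‖^2 = ∑ i, ‖u i‖^2 + ∑ i, ‖v i‖^2 := by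
  have key : ∀ a b : ℂ, ‖a+b‖^2 = ‖a‖^2 + ‖b‖^2 + 2*((starRingEnd ℂ) a * b).re := by
    intro a b
    simp only [Complex.sq_norm, Complex.normSq_apply, Complex.add_re,
      Complex.add_im, Complex.mul_re, Complex.conj_re, Complex.conj_im]
    ring
  have hre : (∑ i, ((starRingEnd ℂ) (u i) * v i)).re = 0 := by
    have : ∑ i, ((starRingEnd ℂ) (u i) * v i) = 0 := by
      rw [← h]
      simp [dotProduct, Pi.star_apply]
    rw [this, Complex.zero_re]
  calc ∑ i, ‖u i + v i‖^2
      = ∑ i, (‖u i‖^2 + ‖v i‖^2 + 2*((starRingEnd ℂ) (u i) * (v i)).re) := by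
        refine Finset.sum_congr rfl fun i _ => key _ _
    _ = ∑ i, ‖u i‖^2 + ∑ i, ‖v i‖^2 + 2*(∑ i, ((starRingEnd ℂ) (u i) * v i)).re := by
        rw [Complex.re_sum]
        rw [Finset.sum_add_distrib, Finset.sum_add_distrib, Finset.mul_sum]
    _ = ∑ i, ‖u i‖^2 + ∑ i, ‖v i‖^2 := by rw [hre]; ring

end Helpers

lemma ratio_bound (μ ε k lp : ℝ) (hε : 0 < ε) (hεlp : ε < lp) (hdich : μ ≤ 0 ∨ lp ≤ μ) :
    ‖((μ:ℂ) + (-ε + k*Complex.I))⁻¹ * ((μ:ℂ) - (-ε + k*Complex.I))‖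
      ≤ max 1 ((lp + ε)/(lp - ε)) := by
  have hre : (((μ:ℂ) + (-ε + k*Complex.I))).re = μ - ε := by simp; ring
  have him : (((μ:ℂ) + (-ε + k*Complex.I))).im = k := by simp
  have hre' : (((μ:ℂ) - (-ε + k*Complex.I))).re = μ + ε := by simp
  have him' : (((μ:ℂ) - (-ε + k*Complex.I))).im = -k := by simp
  set a := (μ:ℂ) + (-ε + k*Complex.I)
  set b := (μ:ℂ) - (-ε + k*Complex.I)
  have hsq : ∀ z : ℂ, ‖z‖^2 = z.re^2 + z.im^2 := by
    intro z
    rw [Complex.sq_norm, Complex.normSq_apply]; ring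
  have ha2 : ‖a‖^2 = (μ-ε)^2 + k^2 := by rw [hsq, hre, him]
  have hb2 : ‖b‖^2 = (μ+ε)^2 + k^2 := by rw [hsq, hre', him']; ring
  have ha0 : 0 < ‖a‖ := by
    rw [norm_pos_iff]
    intro h
    rw [h] at hre
    simp at hre
    rcases hdich with h1 | h1 <;> nlinarith
  rw [norm_mul, norm_inv]
  rcases hdich with h1 | h1
  · refine le_trans ?_ (le_max_left _ _)
    rw [inv_mul_le_iff₀ ha0, mul_one]
    have hle : ‖b‖^2 ≤ ‖a‖^2 := by nlinarith
    calc ‖b‖ = Real.sqrt (‖b‖^2) := (Real.sqrt_sq (norm_nonneg b)).symm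
      _ ≤ Real.sqrt (‖a‖^2) := Real.sqrt_le_sqrt hle
      _ = ‖a‖ := Real.sqrt_sq (norm_nonneg a)
  · refine le_trans ?_ (le_max_right _ _)
    rw [inv_mul_le_iff₀ ha0]
    set R := (lp + ε)/(lp - ε) with hR
    have hRpos : 0 < R := by
      apply div_pos <;> linarith
    have hkey : 0 ≤ 4*ε*(μ-lp)*(lp*μ - ε^2) := by
      apply mul_nonneg
      · apply mul_nonneg (by linarith) (by linarith)
      · nlinarith
    have hsqle : ‖b‖^2 * (lp-ε)^2 ≤ ‖a‖^2 * (lp+ε)^2 := by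
      nlinarith [hkey, mul_nonneg (mul_nonneg hε.le (by linarith : (0:ℝ) ≤ lp)) (sq_nonneg k)]
    have hle : ‖b‖^2 ≤ (‖a‖*R)^2 := by
      rw [mul_pow, hR, div_pow, ← mul_div_assoc,
        le_div_iff₀ (pow_pos (by linarith : (0:ℝ) < lp - ε) 2)]
      linarith
    calc ‖b‖ = Real.sqrt (‖b‖^2) := (Real.sqrt_sq (norm_nonneg b)).symm
      _ ≤ Real.sqrt ((‖a‖*R)^2) := Real.sqrt_le_sqrt hle
      _ = ‖a‖*R := Real.sqrt_sq (by positivity)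

section SNorm
variable {n : Type*} [Fintype n] [DecidableEq n]

-- spectral representation of L + c•1
lemma spec_add (L : Matrix n n ℂ) (hL : L.IsHermitian) (c : ℂ) :
    L + c • 1 = (hL.eigenvectorUnitary : Matrix n n ℂ) *
      Matrix.diagonal (fun i => (hL.eigenvalues i : ℂ) + c) *
      (hL.eigenvectorUnitary : Matrix n n ℂ)ᴴ := by
  set V := (hL.eigenvectorUnitary : Matrix n n ℂ)
  have hVV : V * Vᴴ = 1 := by
    have := hL.eigenvectorUnitary.2
    rw [Matrix.mem_unitaryGroup_iff] at this
    rwa [Matrix.star_eq_conjTranspose] at this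
  have hspec := hL.spectral_theorem
  rw [Unitary.conjStarAlgAut_apply, Matrix.star_eq_conjTranspose] at hspec
  have h1 : c • (1 : Matrix n n ℂ) = V * (c • 1) * Vᴴ := by
    rw [Matrix.mul_smul, Matrix.smul_mul, mul_one, hVV]
  calc L + c • 1 = V * Matrix.diagonal (RCLike.ofReal ∘ hL.eigenvalues) * Vᴴ + V * (c • 1) * Vᴴ := by
        rw [← hspec, ← h1]
    _ = V * (Matrix.diagonal (RCLike.ofReal ∘ hL.eigenvalues) + c • 1) * Vᴴ := by
        rw [Matrix.mul_add, Matrix.add_mul]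
    _ = V * Matrix.diagonal (fun i => (hL.eigenvalues i : ℂ) + c) * Vᴴ := by
        congr 1
        rw [← Matrix.diagonal_one, ← Matrix.diagonal_smul, Matrix.diagonal_add]
        congr 1
        funext i
        simp

lemma spec_sub (L : Matrix n n ℂ) (hL : L.IsHermitian) (c : ℂ) :
    L - c • 1 = (hL.eigenvectorUnitary : Matrix n n ℂ) *
      Matrix.diagonal (fun i => (hL.eigenvalues i : ℂ) - c) *
      (hL.eigenvectorUnitary : Matrix n n ℂ)ᴴ := by
  have h := spec_add L hL (-c)
  rw [neg_smul, ← sub_eq_add_neg] at h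
  rw [h]
  norm_num [sub_eq_add_neg]
end SNorm
lemma one_sub_comm {R : Type*} [Ring R] {P X : R} (h : P * X = X * P) :
    (1 - P) * X = X * (1 - P) := by
  rw [sub_mul, one_mul, h, mul_sub, mul_one]

lemma conj_diag_mul {n : Type*} [Fintype n] [DecidableEq n] (V : Matrix n n ℂ) (hVV : Vᴴ * V = 1) (d e : n → ℂ) :
    (V * Matrix.diagonal d * Vᴴ) * (V * Matrix.diagonal e * Vᴴ)
      = V * Matrix.diagonal (fun i => d i * e i) * Vᴴ := by
  simp only [Matrix.mul_assoc]
  rw [← Matrix.mul_assoc Vᴴ V, hVV, Matrix.one_mul, ← Matrix.mul_assoc (Matrix.diagonal d),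
    Matrix.diagonal_mul_diagonal]
lemma SPL_norm_le {n : Type*} [Fintype n] [DecidableEq n] (P L : Matrix n n ℂ)
    (hP : P.IsHermitian) (hP2 : P * P = P)
    (hL : L.IsHermitian) (hPL : P * L = 0) (hLP : L * P = 0)
    (lp : ℝ) (hlp : 0 < lp)
    (hdich : ∀ i, hL.eigenvalues i ≤ 0 ∨ lp ≤ hL.eigenvalues i)
    (ε k : ℝ) (hε : 0 < ε) (hεlp : ε < lp) :
    ‖SPL P L ((k : ℂ) + (ε : ℂ) * Complex.I)‖ ≤ max 1 ((lp + ε)/(lp - ε)) := by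
  set z : ℂ := (k : ℂ) + (ε : ℂ) * Complex.I with hz
  set w : ℂ := Complex.I * z with hw
  have hw' : w = -(ε:ℂ) + (k:ℂ) * Complex.I := by
    rw [hw, hz]; ring_nf; rw [Complex.I_sq]; ring
  set μ : n → ℝ := hL.eigenvalues
  set V : Matrix n n ℂ := (hL.eigenvectorUnitary : Matrix n n ℂ) with hV
  have hVmem := hL.eigenvectorUnitary.2
  have hVV : V * Vᴴ = 1 := by
    have := hVmem
    rw [Matrix.mem_unitaryGroup_iff, Matrix.star_eq_conjTranspose] at this
    exact this
  have hV'V : Vᴴ * V = 1 := by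
    have := hVmem
    rw [Matrix.mem_unitaryGroup_iff', Matrix.star_eq_conjTranspose] at this
    exact this
  have hne : ∀ i, (μ i : ℂ) + w ≠ 0 := by
    intro i h
    have := congrArg Complex.re h
    rw [hw'] at this
    simp at this
    rcases hdich i with h1 | h1 <;> nlinarith [this]
  have hdd : ∀ (f g : n → ℂ), (∀ i, f i * g i = 1) →
      V * Matrix.diagonal f * Vᴴ * (V * Matrix.diagonal g * Vᴴ) = 1 := by
    intro f g hfg
    rw [conj_diag_mul V hV'V]
    have : (fun i => f i * g i) = fun _ => (1:ℂ) := funext hfg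
    rw [this, Matrix.diagonal_one, Matrix.mul_one, hVV]
  set M : Matrix n n ℂ := L + w • 1 with hM
  set N : Matrix n n ℂ := M⁻¹ with hN
  have hMinv : N = V * Matrix.diagonal (fun i => ((μ i : ℂ) + w)⁻¹) * Vᴴ := by
    rw [hN, hM]
    apply Matrix.inv_eq_right_inv
    rw [spec_add L hL w]
    exact hdd _ _ fun i => mul_inv_cancel₀ (hne i)
  have hNM : N * M = 1 := by
    rw [hMinv, hM, spec_add L hL w]
    exact hdd _ _ fun i => inv_mul_cancel₀ (hne i)
  have hMN : M * N = 1 := by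
    rw [hMinv, hM, spec_add L hL w]
    exact hdd _ _ fun i => mul_inv_cancel₀ (hne i)
  set A : Matrix n n ℂ := N * (L - w • 1) with hAdef
  have hA : A = V * Matrix.diagonal (fun i => ((μ i : ℂ) + w)⁻¹ * ((μ i : ℂ) - w)) * Vᴴ := by
    rw [hAdef, hMinv, spec_sub L hL w, conj_diag_mul V hV'V]
  set C : ℝ := max 1 ((lp + ε)/(lp - ε)) with hC
  have hC1 : (1:ℝ) ≤ C := le_max_left _ _
  have hC0 : (0:ℝ) ≤ C := by linarith
  -- norm of A
  have hAnorm : ‖A‖ ≤ C := by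
    rw [hA]
    calc ‖V * Matrix.diagonal (fun i => ((μ i : ℂ) + w)⁻¹ * ((μ i : ℂ) - w)) * Vᴴ‖
        ≤ ‖V * Matrix.diagonal (fun i => ((μ i : ℂ) + w)⁻¹ * ((μ i : ℂ) - w))‖ * ‖Vᴴ‖ :=
          Matrix.l2_opNorm_mul _ _
      _ ≤ (‖V‖ * ‖Matrix.diagonal (fun i => ((μ i : ℂ) + w)⁻¹ * ((μ i : ℂ) - w))‖) * ‖Vᴴ‖ := by
          have := Matrix.l2_opNorm_mul V
            (Matrix.diagonal (fun i => ((μ i : ℂ) + w)⁻¹ * ((μ i : ℂ) - w)))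
          have hVH : (0:ℝ) ≤ ‖Vᴴ‖ := norm_nonneg _
          nlinarith
      _ ≤ (1 * C) * 1 := by
          have h1 : ‖V‖ ≤ 1 := unit_norm_le V hVmem
          have h2 : ‖Vᴴ‖ ≤ 1 := by
            rw [Matrix.l2_opNorm_conjTranspose]; exact unit_norm_le V hVmem
          have h3 : ‖Matrix.diagonal (fun i => ((μ i : ℂ) + w)⁻¹ * ((μ i : ℂ) - w))‖ ≤ C := by
            apply diag_norm_le _ hC0
            intro i
            have := ratio_bound (μ i) ε k lp hε hεlp (hdich i)
            rw [← hw'] at this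
            exact this
          have hd0 : (0:ℝ) ≤ ‖Matrix.diagonal (fun i => ((μ i : ℂ) + w)⁻¹ * ((μ i : ℂ) - w))‖ :=
            norm_nonneg _
          exact mul_le_mul (mul_le_mul h1 h3 hd0 zero_le_one) h2 (norm_nonneg _)
            (mul_nonneg zero_le_one hC0)
      _ = C := by ring
  -- commutation relations
  have hPM : P * M = M * P := by
    rw [hM, Matrix.mul_add, Matrix.add_mul, hPL, hLP, mul_smul_comm, smul_mul_assoc,
      Matrix.mul_one, Matrix.one_mul]
  have hPLw : P * (L - w • 1) = (L - w • 1) * P := by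
    rw [Matrix.mul_sub, Matrix.sub_mul, hPL, hLP, mul_smul_comm, smul_mul_assoc,
      Matrix.mul_one, Matrix.one_mul]
  have hPN : P * N = N * P := by
    have : N * P = P * N := by
      calc N * P = N * P * 1 := (Matrix.mul_one _).symm
        _ = N * P * (M * N) := by rw [hMN]
        _ = N * (P * M) * N := by simp only [Matrix.mul_assoc]
        _ = N * (M * P) * N := by rw [hPM]
        _ = N * M * (P * N) := by simp only [Matrix.mul_assoc]
        _ = P * N := by rw [hNM, Matrix.one_mul]
    exact this.symm
  have hPA : P * A = A * P := by
    rw [hAdef]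
    calc P * (N * (L - w • 1)) = (P * N) * (L - w • 1) := by simp only [Matrix.mul_assoc]
      _ = (N * P) * (L - w • 1) := by rw [hPN]
      _ = N * (P * (L - w • 1)) := by simp only [Matrix.mul_assoc]
      _ = N * ((L - w • 1) * P) := by rw [hPLw]
      _ = (N * (L - w • 1)) * P := by simp only [Matrix.mul_assoc]
  have hPP1 : P * (1 - P) = 0 := by rw [Matrix.mul_sub, Matrix.mul_one, hP2, sub_self]
  have h1P1P : (1 - P) * (1 - P) = 1 - P := by
    rw [Matrix.sub_mul, Matrix.one_mul, Matrix.mul_sub, Matrix.mul_one, hP2]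
    abel
  -- rewrite S
  have hS : SPL P L z = -(P + A * (1 - P)) := by
    show -P - (1 - P) * M⁻¹ * (L - w • 1) * (1 - P) = -(P + A * (1 - P))
    rw [← hN]
    have h1PN : (1 - P) * N = N * (1 - P) := one_sub_comm hPN
    have h1PLw : (1 - P) * (L - w • 1) = (L - w • 1) * (1 - P) := one_sub_comm hPLw
    have key : (1 - P) * N * (L - w • 1) * (1 - P) = A * (1 - P) := by
      calc (1 - P) * N * (L - w • 1) * (1 - P)
          = (N * (1 - P)) * (L - w • 1) * (1 - P) := by rw [h1PN]
        _ = N * ((1 - P) * (L - w • 1)) * (1 - P) := by simp only [Matrix.mul_assoc]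
        _ = N * ((L - w • 1) * (1 - P)) * (1 - P) := by rw [h1PLw]
        _ = (N * (L - w • 1)) * ((1 - P) * (1 - P)) := by simp only [Matrix.mul_assoc]
        _ = A * (1 - P) := by rw [h1P1P, hAdef]
    rw [key]
    abel
  rw [hS]
  -- vector norm estimate
  refine opnorm_le_sq _ hC0 fun x => ?_
  set u : n → ℂ := P *ᵥ x with hu
  set v : n → ℂ := (1 - P) *ᵥ x with hv
  set y : n → ℂ := A *ᵥ v with hy
  have hSx : ∀ i, ((-(P + A * (1 - P))) *ᵥ x) i = -(u i + y i) := by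
    intro i
    rw [Matrix.neg_mulVec, Matrix.add_mulVec]
    simp only [Pi.neg_apply, Pi.add_apply]
    congr 1
    congr 1
    rw [hy, hv, Matrix.mulVec_mulVec]
  have horth : ∀ (B : Matrix n n ℂ), P * B = 0 → dotProduct (star u) (B *ᵥ x) = 0 := by
    intro B hB
    rw [hu, Matrix.star_mulVec, Matrix.dotProduct_mulVec, Matrix.vecMul_vecMul, hP.eq, hB,
      Matrix.vecMul_zero, zero_dotProduct]
  have horth_uv : dotProduct (star u) v = 0 := by
    have := horth (1 - P) hPP1
    rwa [← hv] at this
  have horth_uy : dotProduct (star u) y = 0 := by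
    have hB : P * (A * (1 - P)) = 0 := by
      calc P * (A * (1 - P)) = (P * A) * (1 - P) := by simp only [Matrix.mul_assoc]
        _ = (A * P) * (1 - P) := by rw [hPA]
        _ = A * (P * (1 - P)) := by simp only [Matrix.mul_assoc]
        _ = 0 := by rw [hPP1, Matrix.mul_zero]
    have := horth (A * (1 - P)) hB
    rwa [← Matrix.mulVec_mulVec, ← hv, ← hy] at this
  have hxuv : ∀ i, x i = u i + v i := by
    intro i
    have : (P + (1 - P)) *ᵥ x = x := by
      rw [add_sub_cancel, Matrix.one_mulVec]
    conv_lhs => rw [← this]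
    rw [Matrix.add_mulVec]
    simp only [Pi.add_apply]
    rfl
  have hpyth : ∑ i, ‖x i‖^2 = ∑ i, ‖u i‖^2 + ∑ i, ‖v i‖^2 := by
    rw [← sq_sum_add u v horth_uv]
    exact Finset.sum_congr rfl fun i _ => by rw [hxuv i]
  have hybound : ∑ i, ‖y i‖^2 ≤ C^2 * ∑ i, ‖v i‖^2 := by
    refine le_trans (mulVec_sq_le A v) ?_
    have h2 : ‖A‖^2 ≤ C^2 := by nlinarith [norm_nonneg A]
    have h3 : (0:ℝ) ≤ ∑ i, ‖v i‖^2 := Finset.sum_nonneg fun i _ => sq_nonneg _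
    nlinarith
  have hu0 : (0:ℝ) ≤ ∑ i, ‖u i‖^2 := Finset.sum_nonneg fun i _ => sq_nonneg _
  calc ∑ i, ‖((-(P + A * (1 - P))) *ᵥ x) i‖^2 = ∑ i, ‖u i + y i‖^2 := by
        refine Finset.sum_congr rfl fun i _ => ?_
        rw [hSx i, norm_neg]
    _ = ∑ i, ‖u i‖^2 + ∑ i, ‖y i‖^2 := sq_sum_add u y horth_uy
    _ ≤ ∑ i, ‖u i‖^2 + C^2 * ∑ i, ‖v i‖^2 := by linarith
    _ ≤ C^2 * (∑ i, ‖u i‖^2 + ∑ i, ‖v i‖^2) := by nlinarith [mul_nonneg (by nlinarith : (0:ℝ) ≤ C^2 - 1) hu0]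
    _ = C^2 * ∑ i, ‖x i‖^2 := by rw [← hpyth]

lemma Tmat_norm_le {E : ℕ} (l : Fin E → ℝ) (z : ℂ) {c : ℝ} (hc : 0 ≤ c)
    (hd : ∀ j, ‖Complex.exp (Complex.I * z * (l j))‖ ≤ c) : ‖Tmat l z‖ ≤ c := by
  refine opnorm_le_sq _ hc fun x => ?_
  have hmv : ∀ s, (Tmat l z *ᵥ x) s =
      Sum.elim (fun i => Complex.exp (Complex.I * z * (l i)) * x (Sum.inr i))
        (fun i => Complex.exp (Complex.I * z * (l i)) * x (Sum.inl i)) s := by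
    intro s
    cases s with
    | inl i => simp [Tmat, Matrix.mulVec, dotProduct, Fintype.sum_sum_type,
        Matrix.fromBlocks, Matrix.diagonal]
    | inr i => simp [Tmat, Matrix.mulVec, dotProduct, Fintype.sum_sum_type,
        Matrix.fromBlocks, Matrix.diagonal]
  simp only [hmv]
  rw [Fintype.sum_sum_type, Fintype.sum_sum_type]
  simp only [Sum.elim_inl, Sum.elim_inr]
  rw [mul_add]
  have key : ∀ (f : Fin E → ℂ), (∑ i, ‖Complex.exp (Complex.I * z * (l i)) * f i‖^2)
      ≤ c^2 * ∑ i, ‖f i‖^2 := by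
    intro f
    rw [Finset.mul_sum]
    refine Finset.sum_le_sum fun i _ => ?_
    rw [norm_mul, mul_pow]
    have h1 := hd i
    have h2 : ‖Complex.exp (Complex.I * z * (l i))‖^2 ≤ c^2 := by
      nlinarith [norm_nonneg (Complex.exp (Complex.I * z * (l i)))]
    nlinarith [norm_nonneg (f i), sq_nonneg ‖f i‖]
  have k1 := key (fun i => x (Sum.inr i))
  have k2 := key (fun i => x (Sum.inl i))
  calc ∑ i, ‖Complex.exp (Complex.I * z * (l i)) * x (Sum.inr i)‖^2
        + ∑ i, ‖Complex.exp (Complex.I * z * (l i)) * x (Sum.inl i)‖^2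
      ≤ c^2 * ∑ i, ‖x (Sum.inr i)‖^2 + c^2 * ∑ i, ‖x (Sum.inl i)‖^2 := add_le_add k1 k2
    _ = c^2 * ∑ i, ‖x (Sum.inl i)‖^2 + c^2 * ∑ i, ‖x (Sum.inr i)‖^2 := by ring


lemma tanh_half (x : ℝ) :
    Real.tanh (x/2) = (Real.exp x - 1)/(Real.exp x + 1) := by
  rw [Real.tanh_eq_sinh_div_cosh, Real.sinh_eq, Real.cosh_eq, Real.exp_neg]
  have ha := Real.exp_pos (x/2)
  have he := Real.exp_pos x
  have haa : Real.exp (x/2) * Real.exp (x/2) = Real.exp x := by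
    rw [← Real.exp_add]; congr 1; ring
  rw [div_div_eq_mul_div, div_mul_eq_mul_div, div_div]
  rw [div_eq_div_iff (by positivity) (by positivity)]
  field_simp
  nlinarith [haa]

lemma exp_edge_norm {E : ℕ} (l : Fin E → ℝ) (lmin ε k : ℝ) (hε : 0 < ε) (hl : ∀ j, lmin ≤ l j) (j : Fin E) :
    ‖Complex.exp (Complex.I * ((k:ℂ) + (ε:ℂ)*Complex.I) * (l j))‖ ≤ Real.exp (-(ε*lmin)) := by
  rw [Complex.norm_exp]
  apply Real.exp_le_exp.mpr
  have h : (Complex.I * ((k:ℂ) + (ε:ℂ)*Complex.I) * (l j)).re = -(ε * l j) := by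
    simp
  rw [h]
  have := hl j
  nlinarith


lemma eig_mem_spec {n : Type*} [Fintype n] [DecidableEq n] {L : Matrix n n ℂ}
    (hL : L.IsHermitian) (i : n) : ((hL.eigenvalues i : ℝ) : ℂ) ∈ spectrum ℂ L :=
  spectrum.algebraMap_mem ℂ (hL.eigenvalues_mem_spectrum_real i)

end AuxLemmas

/-- if l_min > 2/λ⁺_min then for all sufficiently small ε > 0 one has
ε < λ⁺_min tanh(ε l_min/2), ‖U(k+iε)‖ ≤ max{1,(λ⁺_min+ε)/(λ⁺_min-ε)} e^{-ε l_min} < 1,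
and the Neumann series Σ U(k+iε)ˡ converges to (1 - U(k+iε))⁻¹. -/
theorem stmt_17 (E : ℕ) (P L : Matrix (Fin E ⊕ Fin E) (Fin E ⊕ Fin E) ℂ)
    (hP : P.IsHermitian) (hP2 : P * P = P)
    (hL : L.IsHermitian) (hPL : P * L = 0) (hLP : L * P = 0)
    (l : Fin E → ℝ) (lmin : ℝ) (hlmin : ∀ j, lmin ≤ l j)
    (lp : ℝ) (hlp : 0 < lp)
    (hspec : ∀ μ : ℝ, (μ : ℂ) ∈ spectrum ℂ L → 0 < μ → lp ≤ μ)
    (hcond : 2 / lp < lmin) :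
    ∃ ε₀ > 0, ∀ ε : ℝ, 0 < ε → ε < ε₀ →
      ε < lp * Real.tanh (ε * lmin / 2) ∧
      ∀ k : ℝ,
        ‖SPL P L ((k : ℂ) + (ε : ℂ) * Complex.I) *
            Tmat l ((k : ℂ) + (ε : ℂ) * Complex.I)‖ ≤
          max 1 ((lp + ε) / (lp - ε)) * Real.exp (-(ε * lmin)) ∧
        max 1 ((lp + ε) / (lp - ε)) * Real.exp (-(ε * lmin)) < 1 ∧
        HasSum (fun n : ℕ =>
            (SPL P L ((k : ℂ) + (ε : ℂ) * Complex.I) *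
              Tmat l ((k : ℂ) + (ε : ℂ) * Complex.I))^n)
          (1 - SPL P L ((k : ℂ) + (ε : ℂ) * Complex.I) *
              Tmat l ((k : ℂ) + (ε : ℂ) * Complex.I))⁻¹ := by
  have hlmin0 : 0 < lmin := lt_trans (div_pos two_pos hlp) hcond
  have h2lp : 2 < lmin * lp := (div_lt_iff₀ hlp).mp hcond
  have hε₀pos : 0 < lp - 2/lmin := by
    have : 2/lmin < lp := by
      rw [div_lt_iff₀ hlmin0]
      linarith [mul_comm lmin lp]
    linarith
  refine ⟨lp - 2/lmin, hε₀pos, fun ε hε hεε₀ => ?_⟩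
  have h2lmin : 0 ≤ 2/lmin := by positivity
  have hεlp : ε < lp := by linarith
  set x : ℝ := ε * lmin with hxdef
  have hx : 0 < x := mul_pos hε hlmin0
  have hexp : x + 1 ≤ Real.exp x := Real.add_one_le_exp x
  have hepos := Real.exp_pos x
  have h2' : 2 < (lp - ε) * lmin := by
    have h1 : 2/lmin < lp - ε := by linarith
    calc 2 = (2/lmin) * lmin := by field_simp
      _ < (lp - ε) * lmin := by
          exact mul_lt_mul_of_pos_right h1 hlmin0
  have key : ε * (Real.exp x + 1) < lp * (Real.exp x - 1) := by
    nlinarith [mul_nonneg (by linarith : (0:ℝ) ≤ lp - ε) (by linarith : (0:ℝ) ≤ Real.exp x - 1 - x),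
      mul_pos hε (by linarith : (0:ℝ) < (lp - ε) * lmin - 2)]
  have hdich : ∀ i, hL.eigenvalues i ≤ 0 ∨ lp ≤ hL.eigenvalues i := by
    intro i
    by_cases h : 0 < hL.eigenvalues i
    · exact Or.inr (hspec _ (eig_mem_spec hL i) h)
    · exact Or.inl (le_of_not_gt h)
  constructor
  · -- tanh inequality
    rw [show ε * lmin / 2 = (ε*lmin)/2 by ring, tanh_half (ε*lmin), ← hxdef,
      ← mul_div_assoc, lt_div_iff₀ (by linarith : (0:ℝ) < Real.exp x + 1)]
    exact key
  · intro k
    set z : ℂ := (k : ℂ) + (ε : ℂ) * Complex.I with hz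
    set C : ℝ := max 1 ((lp + ε) / (lp - ε)) with hC
    have hC0 : (0:ℝ) ≤ C := le_trans zero_le_one (le_max_left _ _)
    have hSb : ‖SPL P L z‖ ≤ C :=
      SPL_norm_le P L hP hP2 hL hPL hLP lp hlp hdich ε k hε hεlp
    have hTb : ‖Tmat l z‖ ≤ Real.exp (-(ε*lmin)) := by
      apply Tmat_norm_le l z (Real.exp_pos _).le
      intro j
      rw [hz]
      exact exp_edge_norm l lmin ε k hε hlmin j
    have bound1 : ‖SPL P L z * Tmat l z‖ ≤ C * Real.exp (-(ε*lmin)) := by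
      calc ‖SPL P L z * Tmat l z‖ ≤ ‖SPL P L z‖ * ‖Tmat l z‖ := Matrix.l2_opNorm_mul _ _
        _ ≤ C * Real.exp (-(ε*lmin)) :=
            mul_le_mul hSb hTb (norm_nonneg _) hC0
    have bound2 : C * Real.exp (-(ε*lmin)) < 1 := by
      have hmax : C = (lp + ε)/(lp - ε) := by
        rw [hC]
        apply max_eq_right
        rw [le_div_iff₀ (by linarith : (0:ℝ) < lp - ε)]
        linarith
      rw [hmax, Real.exp_neg, ← hxdef, div_mul_eq_mul_div,
        div_lt_one (by linarith : (0:ℝ) < lp - ε), mul_inv_lt_iff₀ hepos]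
      nlinarith [key]
    have hU : ‖SPL P L z * Tmat l z‖ < 1 := lt_of_le_of_lt bound1 bound2
    refine ⟨bound1, bound2, ?_⟩
    have hs := hasSum_geom_series_inverse (SPL P L z * Tmat l z) hU
    rwa [← Matrix.nonsing_inv_eq_ringInverse] at hs
end
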